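/- Let V be the Volterra operator on L²[0,1], (Vf)(x) = ∫₀ˣ f(y) dy. Then the identity function f(x) = x lies in Ran(V) but not in Ran(V V*); in particular Ran(V V*) is a proper subset of Ran(V). -/

import Mathlib

open MeasureTheory ContinuousLinearMap

theorem eqOn_of_ae_eq_cont {F G : ℝ → ℝ}
    (hF : ContinuousOn F (Set.Icc 0 1)) (hG : ContinuousOn G (Set.Icc 0 1))
    (h : ∀ᵐ x ∂(volume.restrict (Set.Icc (0:ℝ) 1)), F x = G x) :
    ∀ x ∈ Set.Icc (0:ℝ) 1, F x = G x := by
  intro x₀ hx₀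
  by_contra hne
  set d := |F x₀ - G x₀| with hd
  have hd0 : 0 < d := abs_pos.mpr (sub_ne_zero.mpr hne)
  have hcont : ContinuousOn (fun x => F x - G x) (Set.Icc 0 1) := hF.sub hG
  obtain ⟨δ, hδ0, hδ⟩ := (Metric.continuousOn_iff.mp hcont) x₀ hx₀ d hd0
  set a := max (x₀ - δ) 0 with ha
  set b := min (x₀ + δ) 1 with hb
  have hab : a < b := by
    rcases hx₀ with ⟨h0, h1⟩
    apply max_lt <;> apply lt_min <;> linarith
  have hsub : Set.Ioo a b ⊆ {x | ¬ F x = G x} := by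
    intro x hx
    have hxI : x ∈ Set.Icc (0:ℝ) 1 := ⟨le_of_lt (lt_of_le_of_lt (le_max_right _ _) hx.1),
      le_of_lt (lt_of_lt_of_le hx.2 (min_le_right _ _))⟩
    have hxd : dist x x₀ < δ := by
      rw [Real.dist_eq, abs_lt]
      constructor
      · have := lt_of_le_of_lt (le_max_left _ _) hx.1; linarith
      · have := lt_of_lt_of_le hx.2 (min_le_left _ _); linarith
    have := hδ x hxI hxd
    rw [Real.dist_eq] at this
    intro heq
    rw [heq, sub_self, zero_sub, abs_neg] at this
    exact lt_irrefl _ this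
  have hmeas : volume.restrict (Set.Icc (0:ℝ) 1) {x | ¬ F x = G x} = 0 := h
  have hle : volume.restrict (Set.Icc (0:ℝ) 1) (Set.Ioo a b) = 0 :=
    le_antisymm (hmeas ▸ measure_mono hsub) (zero_le)
  rw [Measure.restrict_apply' measurableSet_Icc] at hle
  have hIoo : Set.Ioo a b ∩ Set.Icc 0 1 = Set.Ioo a b := by
    apply Set.inter_eq_left.mpr
    intro x hx
    exact ⟨le_of_lt (lt_of_le_of_lt (le_max_right _ _) hx.1),
      le_of_lt (lt_of_lt_of_le hx.2 (min_le_right _ _))⟩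
  rw [hIoo, Real.volume_Ioo] at hle
  simp only [ENNReal.ofReal_eq_zero] at hle
  linarith

theorem volterra_range_proper
    (μ : Measure ℝ) (hμ : μ = volume.restrict (Set.Icc 0 1))
    (V : Lp ℝ 2 μ →L[ℝ] Lp ℝ 2 μ)
    (hV : ∀ f : Lp ℝ 2 μ, ∀ᵐ x ∂μ, V f x = ∫ y in Set.Ioc 0 x, f y ∂μ)
    (hVadj : ∀ f : Lp ℝ 2 μ, ∀ᵐ x ∂μ, adjoint V f x = ∫ y in Set.Ioc x 1, f y ∂μ)
    (id2 : Lp ℝ 2 μ) (hid : ∀ᵐ x ∂μ, id2 x = x) :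
    id2 ∈ Set.range V ∧ id2 ∉ Set.range (V ∘L adjoint V) ∧
      Set.range (V ∘L adjoint V) ⊂ Set.range V := by
  subst hμ
  haveI hfin : IsFiniteMeasure (volume.restrict (Set.Icc (0:ℝ) 1)) := by
    constructor
    rw [Measure.restrict_apply_univ, Real.volume_Icc]
    simp
  have haeIcc : ∀ᵐ x ∂(volume.restrict (Set.Icc (0:ℝ) 1)), x ∈ Set.Icc (0:ℝ) 1 :=
    ae_restrict_mem measurableSet_Icc
  -- Part 1 : id2 ∈ range V
  have hone : MemLp (fun _ : ℝ => (1:ℝ)) 2 (volume.restrict (Set.Icc (0:ℝ) 1)) := memLp_const 1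
  have h1 : id2 ∈ Set.range ⇑V := by
    refine ⟨hone.toLp _, Lp.ext ?_⟩
    have hcongr : ∀ x : ℝ, ∫ y in Set.Ioc 0 x, (hone.toLp _) y ∂(volume.restrict (Set.Icc (0:ℝ) 1))
        = ∫ y in Set.Ioc 0 x, (1:ℝ) ∂(volume.restrict (Set.Icc (0:ℝ) 1)) :=
      fun x => integral_congr_ae (ae_restrict_of_ae hone.coeFn_toLp)
    filter_upwards [hV (hone.toLp _), hid, haeIcc] with x hx hidx hxI
    have hss : Set.Ioc (0:ℝ) x ∩ Set.Icc 0 1 = Set.Ioc 0 x :=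
      Set.inter_eq_left.mpr (fun t ht => ⟨le_of_lt ht.1, le_trans ht.2 hxI.2⟩)
    rw [hx, hidx, hcongr x, setIntegral_const, smul_eq_mul, mul_one]
    rw [measureReal_def, Measure.restrict_apply measurableSet_Ioc, hss, Real.volume_Ioc]
    rw [sub_zero, ENNReal.toReal_ofReal hxI.1]
  -- Part 2 : id2 ∉ range (V ∘L adjoint V)
  have h2 : id2 ∉ Set.range ⇑(V ∘L adjoint V) := by
    rintro ⟨g, hg⟩
    have hgI : IntegrableOn (⇑g) (Set.Icc 0 1) volume := (Lp.memLp g).integrable (by norm_num)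
    set K : ℝ → ℝ := fun y => ∫ t in y..1, g t with hKdef
    have huIcc : Set.uIcc (0:ℝ) 1 = Set.Icc 0 1 := Set.uIcc_of_le (by norm_num)
    have hKc : ContinuousOn K (Set.Icc 0 1) := by
      have := intervalIntegral.continuousOn_primitive_interval_left (f := ⇑g)
        (a := (0:ℝ)) (b := 1) (μ := volume) (by rw [huIcc]; exact hgI)
      rwa [huIcc] at this
    have hK : ⇑(adjoint V g) =ᵐ[volume.restrict (Set.Icc (0:ℝ) 1)] K := by
      filter_upwards [hVadj g, haeIcc] with y hy hyI
      have hss : Set.Ioc y 1 ∩ Set.Icc 0 1 = Set.Ioc y 1 :=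
        Set.inter_eq_left.mpr (fun t ht => ⟨le_trans hyI.1 (le_of_lt ht.1), ht.2⟩)
      rw [hy, Measure.restrict_restrict measurableSet_Ioc, hss]
      exact (intervalIntegral.integral_of_le hyI.2).symm
    set F : ℝ → ℝ := fun x => ∫ t in (0:ℝ)..x, K t with hFdef
    have hKint : IntegrableOn K (Set.Icc 0 1) volume := hKc.integrableOn_Icc
    have hFc : ContinuousOn F (Set.Icc 0 1) := by
      have := intervalIntegral.continuousOn_primitive_interval (f := K)
        (a := (0:ℝ)) (b := 1) (μ := volume) (by rw [huIcc]; exact hKint)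
      rwa [huIcc] at this
    have hFae : ∀ᵐ x ∂(volume.restrict (Set.Icc (0:ℝ) 1)), F x = x := by
      have hcoe : ⇑(V (adjoint V g)) = ⇑id2 := by rw [← hg]; rfl
      filter_upwards [hV (adjoint V g), hid, haeIcc] with x hx hidx hxI
      have hss : Set.Ioc (0:ℝ) x ∩ Set.Icc 0 1 = Set.Ioc 0 x :=
        Set.inter_eq_left.mpr (fun t ht => ⟨le_of_lt ht.1, le_trans ht.2 hxI.2⟩)
      have e0 : (∫ y in Set.Ioc 0 x, (adjoint V g) y ∂(volume.restrict (Set.Icc (0:ℝ) 1))) = F x := by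
        rw [integral_congr_ae (ae_restrict_of_ae hK),
          Measure.restrict_restrict measurableSet_Ioc, hss]
        exact (intervalIntegral.integral_of_le hxI.1).symm
      rw [← e0, ← hx, congrFun hcoe x, hidx]
    have hFeq : ∀ x ∈ Set.Icc (0:ℝ) 1, F x = x :=
      eqOn_of_ae_eq_cont hFc (continuous_id.continuousOn) hFae
    have hK1 : K 1 = 0 := intervalIntegral.integral_same
    obtain ⟨δ, hδ0, hδ⟩ := (Metric.continuousOn_iff.mp hKc) 1 (by norm_num)
      (1/2) (by norm_num)
    set δ' := min δ 1 with hδ'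
    have hδ'0 : 0 < δ' := lt_min hδ0 one_pos
    have hδ'1 : δ' ≤ 1 := min_le_right _ _
    set y0 := 1 - δ'/2 with hy0
    have hy0I : y0 ∈ Set.Icc (0:ℝ) 1 := ⟨by simp only [hy0]; linarith, by simp only [hy0]; linarith⟩
    have hsub1 : Set.uIcc (0:ℝ) y0 ⊆ Set.Icc 0 1 := by
      rw [Set.uIcc_of_le hy0I.1]
      exact Set.Icc_subset_Icc le_rfl hy0I.2
    have hsub2 : Set.uIcc y0 (1:ℝ) ⊆ Set.Icc 0 1 := by
      rw [Set.uIcc_of_le hy0I.2]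
      exact Set.Icc_subset_Icc hy0I.1 le_rfl
    have hint1 : IntervalIntegrable K volume 0 y0 := (hKc.mono hsub1).intervalIntegrable
    have hint2 : IntervalIntegrable K volume y0 1 := (hKc.mono hsub2).intervalIntegrable
    have hsplit : (∫ t in (0:ℝ)..y0, K t) + ∫ t in y0..(1:ℝ), K t = ∫ t in (0:ℝ)..(1:ℝ), K t :=
      intervalIntegral.integral_add_adjacent_intervals hint1 hint2
    have hF1 : F 1 = 1 := hFeq 1 (by norm_num)
    have hFy0 : F y0 = y0 := hFeq y0 hy0I
    have hval : (∫ t in y0..(1:ℝ), K t) = δ'/2 := by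
      have h' : F y0 + ∫ t in y0..(1:ℝ), K t = F 1 := hsplit
      rw [hF1, hFy0, hy0] at h'
      linarith
    have hbound : ‖∫ t in y0..(1:ℝ), K t‖ ≤ (1/2) * |1 - y0| := by
      apply intervalIntegral.norm_integral_le_of_norm_le_const
      intro t ht
      rw [Set.uIoc_of_le hy0I.2] at ht
      have htI : t ∈ Set.Icc (0:ℝ) 1 := ⟨le_trans hy0I.1 (le_of_lt ht.1), ht.2⟩
      have htd : dist t 1 < δ := by
        rw [Real.dist_eq, abs_of_nonpos (by linarith [ht.2])]
        have hlt : y0 < t := ht.1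
        have h2' : δ'/2 ≤ δ/2 := by
          have := min_le_left δ 1; rw [← hδ'] at this; linarith
        rw [hy0] at hlt
        linarith
      have hd := hδ t htI htd
      rw [hK1, Real.dist_eq, sub_zero] at hd
      rw [Real.norm_eq_abs]
      exact le_of_lt hd
    rw [hval, Real.norm_eq_abs, abs_of_nonneg (by linarith)] at hbound
    have habs : |1 - y0| = δ'/2 := by rw [hy0, abs_of_nonneg (by linarith)]; ring
    rw [habs] at hbound
    linarith
  -- conclude
  refine ⟨h1, h2, ?_, fun hle => h2 (hle h1)⟩
  rintro x ⟨g, rfl⟩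
  exact ⟨adjoint V g, rfl⟩
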